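/- For every separable two-qudit state ρ_sep = Σ_k β_k ρ₁^(k)⊗ρ₂^(k) on ℂ^d⊗ℂ^d (d ≥ 2), where β_k ≥ 0, Σ_k β_k = 1 and each ρ₁^(k), ρ₂^(k) is a state on ℂ^d, the geometric quantum discord satisfies D_g(ρ_sep) ≤ ((d−1)/d)². -/

import Mathlib

open Matrix Finset
open scoped Kronecker ComplexOrder

noncomputable section

/-- A quantum state: a positive semidefinite (hence Hermitian) matrix of trace 1. -/
def IsState {n : Type*} [Fintype n] (ρ : Matrix n n ℂ) : Prop :=
  ρ.PosSemidef ∧ ρ.trace = 1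

/-- The pure state (rank-one projection) associated with a vector `ψ`. -/
def pureState {n : Type*} (ψ : n → ℂ) : Matrix n n ℂ :=
  Matrix.vecMulVec ψ (star ψ)

/-- A Bloch basis for `d × d` complex matrices: a family of nonzero traceless Hermitian
matrices with `tr[Υ k * Υ m] = 2 δ_{km}`. -/
def IsBlochBasis (d : ℕ) (Υ : Fin (d ^ 2 - 1) → Matrix (Fin d) (Fin d) ℂ) : Prop :=
  (∀ k, Υ k ≠ 0) ∧ (∀ k, (Υ k).IsHermitian) ∧ (∀ k, (Υ k).trace = 0) ∧
    (∀ k m, (Υ k * Υ m).trace = if k = m then 2 else 0)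

/-- The Bloch vector of a state `ρ` on `ℂ^d` relative to a Bloch basis `Υ`. -/
def blochVector {d : ℕ} (ρ : Matrix (Fin d) (Fin d) ℂ)
    (Υ : Fin (d ^ 2 - 1) → Matrix (Fin d) (Fin d) ℂ) : Fin (d ^ 2 - 1) → ℝ :=
  fun k => Real.sqrt ((d : ℝ) / (2 * ((d : ℝ) - 1))) * ((ρ * Υ k).trace).re

/-- Partial trace over the first tensor factor. -/
def ptrace1 {d₁ d₂ : ℕ} (ρ : Matrix (Fin d₁ × Fin d₂) (Fin d₁ × Fin d₂) ℂ) :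
    Matrix (Fin d₂) (Fin d₂) ℂ :=
  Matrix.of fun j j' => ∑ i, ρ (i, j) (i, j')

/-- Partial trace over the second tensor factor. -/
def ptrace2 {d₁ d₂ : ℕ} (ρ : Matrix (Fin d₁ × Fin d₂) (Fin d₁ × Fin d₂) ℂ) :
    Matrix (Fin d₁) (Fin d₁) ℂ :=
  Matrix.of fun i i' => ∑ j, ρ (i, j) (i', j)

/-- Partial transpose with respect to the second tensor factor. -/
def ptranspose2 {d₁ d₂ : ℕ} (ρ : Matrix (Fin d₁ × Fin d₂) (Fin d₁ × Fin d₂) ℂ) :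
    Matrix (Fin d₁ × Fin d₂) (Fin d₁ × Fin d₂) ℂ :=
  Matrix.of fun p q => ρ (p.1, q.2) (q.1, p.2)

/-- The correlation matrix of a two-qudit state, `T^{ij} = tr[ρ (Υ₁ i ⊗ Υ₂ j)]`. -/
def corrMatrix {d₁ d₂ : ℕ} (ρ : Matrix (Fin d₁ × Fin d₂) (Fin d₁ × Fin d₂) ℂ)
    (Υ₁ : Fin (d₁ ^ 2 - 1) → Matrix (Fin d₁) (Fin d₁) ℂ)
    (Υ₂ : Fin (d₂ ^ 2 - 1) → Matrix (Fin d₂) (Fin d₂) ℂ) :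
    Matrix (Fin (d₁ ^ 2 - 1)) (Fin (d₂ ^ 2 - 1)) ℝ :=
  Matrix.of fun i j => ((ρ * (Υ₁ i ⊗ₖ Υ₂ j)).trace).re

/-- A quantum-classical state `χ = Σ_k α_k σ_k ⊗ |k⟩⟨k|`. -/
def IsQCState {d₁ d₂ : ℕ} (χ : Matrix (Fin d₁ × Fin d₂) (Fin d₁ × Fin d₂) ℂ) : Prop :=
  ∃ (α : Fin d₂ → ℝ) (σ : Fin d₂ → Matrix (Fin d₁) (Fin d₁) ℂ) (e : Fin d₂ → Fin d₂ → ℂ),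
    (∀ k, 0 ≤ α k) ∧ (∑ k, α k = 1) ∧ (∀ k, IsState (σ k)) ∧
    (∀ k l, ∑ i, star (e k i) * e l i = if k = l then (1 : ℂ) else 0) ∧
    χ = ∑ k, (α k : ℂ) • (σ k ⊗ₖ pureState (e k))

/-- The geometric quantum discord (with the Hilbert–Schmidt distance):
`D_g(ρ) = min over quantum-classical χ of tr[(ρ - χ)²]`. -/
def Dg {d₁ d₂ : ℕ} (ρ : Matrix (Fin d₁ × Fin d₂) (Fin d₁ × Fin d₂) ℂ) : ℝ :=
  sInf {x : ℝ | ∃ χ, IsQCState χ ∧ x = (((ρ - χ) * (ρ - χ)).trace).re}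

/-- `η` lists the eigenvalues of the real matrix `G` in decreasing order with algebraic
multiplicities: `η` is antitone and the characteristic polynomial of `G` splits as
`∏ (X - η n)`. -/
def IsEigList {N : ℕ} (G : Matrix (Fin N) (Fin N) ℝ) (η : Fin N → ℝ) : Prop :=
  Antitone η ∧ G.charpoly = ∏ n, (Polynomial.X - Polynomial.C (η n))

/-- A simplex frame in `ℝ^N`: `d` unit vectors summing to zero with pairwise scalar
products `-1/(d-1)`. -/
def IsSimplexFrame {N : ℕ} (d : ℕ) (y : Fin d → Fin N → ℝ) : Prop :=
  (∀ k, ∑ i, y k i ^ 2 = 1) ∧ (∀ i, ∑ k, y k i = 0) ∧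
    (∀ j k, j ≠ k → ∑ i, y j i * y k i = -1 / ((d : ℝ) - 1))

/-- The operator `Π_{Ω_y} = ((d-1)/d) Σ_k y_k y_kᵀ` associated with a simplex frame. -/
def simplexProj {N : ℕ} (d : ℕ) (y : Fin d → Fin N → ℝ) : Matrix (Fin N) (Fin N) ℝ :=
  (((d : ℝ) - 1) / d) • ∑ k, Matrix.vecMulVec (y k) (y k)

/-- The matrix `G(ρ) = ((d₂-1)/(d₁ d₂)) r₂ r₂ᵀ + (1/4) T_ρᵀ T_ρ`. -/
def Gmat {d₁ d₂ : ℕ} (ρ : Matrix (Fin d₁ × Fin d₂) (Fin d₁ × Fin d₂) ℂ)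
    (Υ₁ : Fin (d₁ ^ 2 - 1) → Matrix (Fin d₁) (Fin d₁) ℂ)
    (Υ₂ : Fin (d₂ ^ 2 - 1) → Matrix (Fin d₂) (Fin d₂) ℂ) :
    Matrix (Fin (d₂ ^ 2 - 1)) (Fin (d₂ ^ 2 - 1)) ℝ :=
  (((d₂ : ℝ) - 1) / (d₁ * d₂)) •
      Matrix.vecMulVec (blochVector (ptrace1 ρ) Υ₂) (blochVector (ptrace1 ρ) Υ₂)
    + (4 : ℝ)⁻¹ • ((corrMatrix ρ Υ₁ Υ₂)ᵀ * corrMatrix ρ Υ₁ Υ₂)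

/-- The trace norm (sum of singular values) of a complex square matrix. -/
def traceNorm {n : Type*} [Fintype n] [DecidableEq n] (X : Matrix n n ℂ) : ℝ :=
  ∑ i, Real.sqrt ((Matrix.posSemidef_conjTranspose_mul_self X).1.eigenvalues i)

/-- The negativity `N_ρ = (‖ρ^{T₂}‖₁ - 1)/2`. -/
def negativity {d₁ d₂ : ℕ} (ρ : Matrix (Fin d₁ × Fin d₂) (Fin d₁ × Fin d₂) ℂ) : ℝ :=
  (traceNorm (ptranspose2 ρ) - 1) / 2

/-- The concurrence of a pure two-qudit state, `C = √(2 (1 - tr[ρ₁²]))`, `ρ₁ = tr₂ ρ`. -/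
def concurrence {d₁ d₂ : ℕ} (ρ : Matrix (Fin d₁ × Fin d₂) (Fin d₁ × Fin d₂) ℂ) : ℝ :=
  Real.sqrt (2 * (1 - ((ptrace2 ρ * ptrace2 ρ).trace).re))

end


noncomputable section

namespace Stmt12Aux

open Complex

set_option linter.unusedSectionVars false
set_option maxHeartbeats 1000000

variable {n : Type*} [Fintype n] [DecidableEq n]

/-- Vectorization of a matrix into Euclidean space. -/
def vec {m : Type*} [Fintype m] (X : Matrix m m ℂ) : EuclideanSpace ℂ (m × m) :=
  WithLp.toLp 2 (fun p : m × m => X p.1 p.2)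

lemma vec_add {m : Type*} [Fintype m] (X Y : Matrix m m ℂ) : vec (X + Y) = vec X + vec Y := rfl
lemma vec_smul {m : Type*} [Fintype m] (c : ℂ) (X : Matrix m m ℂ) : vec (c • X) = c • vec X := rfl
lemma vec_sub {m : Type*} [Fintype m] (X Y : Matrix m m ℂ) : vec (X - Y) = vec X - vec Y := rfl

lemma vec_sum {m : Type*} [Fintype m] {ι : Type*} (s : Finset ι) (f : ι → Matrix m m ℂ) :
    vec (∑ j ∈ s, f j) = ∑ j ∈ s, vec (f j) := by
  classical
  induction s using Finset.induction with
  | empty => rfl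
  | insert _ _ h ih => rw [Finset.sum_insert h, Finset.sum_insert h, vec_add, ih]

lemma norm_vec_sq {m : Type*} [Fintype m] (X : Matrix m m ℂ) :
    ‖vec X‖ ^ 2 = ∑ p : m × m, ‖X p.1 p.2‖ ^ 2 := by
  rw [EuclideanSpace.norm_eq, Real.sq_sqrt (by positivity)]
  rfl

lemma inner_vec {m : Type*} [Fintype m] (X Y : Matrix m m ℂ) :
    (inner ℂ (vec X) (vec Y) : ℂ) = ∑ p : m × m, (starRingEnd ℂ) (X p.1 p.2) * Y p.1 p.2 := by
  simp [PiLp.inner_apply, vec, RCLike.inner_apply]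
  exact Finset.sum_congr rfl fun _ _ => mul_comm _ _

lemma inner_vec_one {A : Matrix n n ℂ} : (inner ℂ (vec A) (vec 1) : ℂ)
    = (starRingEnd ℂ) A.trace := by
  rw [inner_vec, Fintype.sum_prod_type, Matrix.trace, map_sum]
  congr 1; ext i
  rw [Finset.sum_eq_single i (fun j _ hji => by simp [Matrix.one_apply, (Ne.symm hji)])
    (by simp)]
  simp [Matrix.one_apply]

lemma trace_sq_re {m : Type*} [Fintype m] (Δ : Matrix m m ℂ) (h : Δ.IsHermitian) :
    ((Δ * Δ).trace).re = ‖vec Δ‖ ^ 2 := by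
  have key : (Δ * Δ).trace = ∑ p : m × m, (Complex.normSq (Δ p.1 p.2) : ℂ) := by
    rw [Matrix.trace, Fintype.sum_prod_type]
    simp only [Matrix.diag_apply, Matrix.mul_apply]
    congr 1; ext i; congr 1; ext j
    have h2 : Δ j i = (starRingEnd ℂ) (Δ i j) := by
      conv_lhs => rw [← h]
      rfl
    rw [h2, Complex.mul_conj]
  rw [key, norm_vec_sq]
  push_cast
  simp [Complex.sq_norm]

lemma inner_pure_pure (e f : n → ℂ) :
    (inner ℂ (vec (pureState e)) (vec (pureState f)) : ℂ)
      = (∑ i, (starRingEnd ℂ) (e i) * f i) * (starRingEnd ℂ) (∑ j, (starRingEnd ℂ) (e j) * f j) := by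
  rw [inner_vec, Fintype.sum_prod_type]
  calc ∑ i, ∑ j, (starRingEnd ℂ) ((pureState e) i j) * (pureState f) i j
      = ∑ i, ∑ j, ((starRingEnd ℂ) (e i) * f i) * ((starRingEnd ℂ) ((starRingEnd ℂ) (e j) * f j)) := by
        apply Finset.sum_congr rfl; intro i _; apply Finset.sum_congr rfl; intro j _
        simp only [pureState, Matrix.vecMulVec_apply, Pi.star_apply, RCLike.star_def,
          _root_.map_mul, starRingEnd_self_apply]
        ring
    _ = _ := by
        rw [← Finset.sum_mul_sum, ← map_sum]

lemma inner_pure_matrix (e : n → ℂ) (B : Matrix n n ℂ) :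
    (inner ℂ (vec (pureState e)) (vec B) : ℂ) = star e ⬝ᵥ (B *ᵥ e) := by
  rw [inner_vec, Fintype.sum_prod_type]
  simp only [dotProduct, Matrix.mulVec, Pi.star_apply, pureState, Matrix.vecMulVec_apply,
    RCLike.star_def, _root_.map_mul, starRingEnd_self_apply]
  apply Finset.sum_congr rfl; intro i _
  rw [Finset.mul_sum]
  apply Finset.sum_congr rfl; intro j _
  ring

lemma sum_sq_entries_le_one {A : Matrix n n ℂ} (hA : A.PosSemidef) (htr : A.trace = 1) :
    ∑ p : n × n, ‖A p.1 p.2‖ ^ 2 ≤ 1 := by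
  obtain ⟨C, rfl⟩ : ∃ C : Matrix n n ℂ, A = Cᴴ * C := by
    open MatrixOrder in exact CStarAlgebra.nonneg_iff_eq_star_mul_self.mp hA.nonneg
  set A := Cᴴ * C with hAdef
  set v : n → EuclideanSpace ℂ n := fun i => WithLp.toLp 2 (fun k => C k i) with hv
  have hentry : ∀ i j, A i j = inner ℂ (v i) (v j) := by
    intro i j
    simp [hAdef, Matrix.mul_apply, PiLp.inner_apply, RCLike.inner_apply, v,
      Matrix.conjTranspose_apply]
    exact Finset.sum_congr rfl fun _ _ => mul_comm _ _
  have hdiag : ∀ i, (A i i).re = ‖v i‖ ^ 2 := by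
    intro i
    rw [hentry i i, ← RCLike.re_to_complex, inner_self_eq_norm_sq (𝕜 := ℂ)]
  have hb : ∀ i j, ‖A i j‖ ^ 2 ≤ (A i i).re * (A j j).re := by
    intro i j
    rw [hentry i j, hdiag i, hdiag j]
    calc ‖(inner ℂ (v i) (v j) : ℂ)‖ ^ 2 ≤ (‖v i‖ * ‖v j‖) ^ 2 := by
          apply pow_le_pow_left₀ (norm_nonneg _) (norm_inner_le_norm _ _)
      _ = ‖v i‖ ^ 2 * ‖v j‖ ^ 2 := by ring
  calc ∑ p : n × n, ‖A p.1 p.2‖ ^ 2 ≤ ∑ p : n × n, (A p.1 p.1).re * (A p.2 p.2).re :=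
        Finset.sum_le_sum fun p _ => hb p.1 p.2
    _ = (∑ i, (A i i).re) * (∑ j, (A j j).re) := by
        rw [Fintype.sum_prod_type, Finset.sum_mul_sum]
    _ = 1 := by
        have h1 : ∑ i, (A i i).re = 1 := by
          have h2 : (A.trace).re = 1 := by rw [htr]; simp
          simpa [Matrix.trace, Complex.re_sum] using h2
        rw [h1]; norm_num

lemma norm_vec_le_one {A : Matrix n n ℂ} (hA : A.PosSemidef) (htr : A.trace = 1) :
    ‖vec A‖ ^ 2 ≤ 1 := by
  rw [norm_vec_sq]; exact sum_sq_entries_le_one hA htr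

lemma norm_vec_one_sq : ‖vec (1 : Matrix n n ℂ)‖ ^ 2 = Fintype.card n := by
  rw [norm_vec_sq, Fintype.sum_prod_type]
  have h1 : ∀ i j : n, ‖(1 : Matrix n n ℂ) i j‖ ^ 2 = if j = i then (1:ℝ) else 0 := by
    intro i j
    by_cases h : i = j <;> simp [Matrix.one_apply, h, eq_comm]
  simp_rw [h1]
  have h2 : ∀ i : n, (∑ j : n, if j = i then (1:ℝ) else 0) = 1 := fun i => by
    rw [Finset.sum_ite_eq' Finset.univ i (fun _ => (1:ℝ))]; simp
  simp_rw [h2]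
  rw [Finset.sum_const, Finset.card_univ, nsmul_eq_mul, mul_one]

lemma tilde_bound (hc : 0 < Fintype.card n) {A : Matrix n n ℂ} (hA : A.PosSemidef)
    (htr : A.trace = 1) :
    ‖vec (A - ((Fintype.card n : ℂ))⁻¹ • 1)‖ ^ 2 ≤ 1 - ((Fintype.card n : ℝ))⁻¹ := by
  set c := Fintype.card n with hcdef
  have hcpos : (0:ℝ) < (c:ℝ) := by exact_mod_cast hc
  rw [vec_sub, vec_smul]
  rw [norm_sub_sq (𝕜 := ℂ)]
  have hAone : (inner ℂ (vec A) (vec (1 : Matrix n n ℂ)) : ℂ) = 1 := by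
    rw [inner_vec_one, htr]; simp
  have hinner : RCLike.re (inner ℂ (vec A) ((c:ℂ)⁻¹ • vec (1 : Matrix n n ℂ)) : ℂ) = (c:ℝ)⁻¹ := by
    rw [inner_smul_right, hAone, mul_one]
    have : ((c:ℕ):ℂ)⁻¹ = (((c:ℝ)⁻¹ : ℝ) : ℂ) := by push_cast; ring
    rw [this]
    simp
  have hy : ‖(c:ℂ)⁻¹ • vec (1 : Matrix n n ℂ)‖ ^ 2 = (c:ℝ)⁻¹ := by
    rw [norm_smul, mul_pow, norm_vec_one_sq]
    have : ‖((c:ℕ):ℂ)⁻¹‖ = (c:ℝ)⁻¹ := by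
      rw [norm_inv]; norm_num
    rw [this, ← hcdef]
    field_simp
  rw [hinner, hy]
  have := norm_vec_le_one hA htr
  have h1c : (c:ℝ)⁻¹ ≤ 1 := by
    rw [inv_le_one_iff₀]; right; exact_mod_cast hc
  nlinarith [this]

lemma sum_dot_eq_trace (e : n → n → ℂ)
    (hcompl : ∀ i j, (∑ k, e k i * (starRingEnd ℂ) (e k j)) = if i = j then (1:ℂ) else 0)
    (B : Matrix n n ℂ) : (∑ k, star (e k) ⬝ᵥ (B *ᵥ e k)) = B.trace := by
  have expand : ∀ k, star (e k) ⬝ᵥ (B *ᵥ e k)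
      = ∑ i, ∑ j, (starRingEnd ℂ) (e k i) * (B i j * e k j) := by
    intro k
    simp only [dotProduct, Matrix.mulVec, Pi.star_apply, RCLike.star_def,
      Finset.mul_sum]
  have hconj : ∀ i j : n, (∑ k, (starRingEnd ℂ) (e k i) * e k j)
      = if i = j then (1:ℂ) else 0 := by
    intro i j
    have h3 := congrArg (starRingEnd ℂ) (hcompl i j)
    rw [map_sum] at h3
    simp only [_root_.map_mul, starRingEnd_self_apply] at h3
    rw [h3]
    by_cases h : i = j <;> simp [h]
  have step : (∑ k, star (e k) ⬝ᵥ (B *ᵥ e k))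
      = ∑ i, ∑ j, B i j * (∑ k, (starRingEnd ℂ) (e k i) * e k j) := by
    simp_rw [expand]
    rw [Finset.sum_comm]
    apply Finset.sum_congr rfl; intro i _
    rw [Finset.sum_comm]
    apply Finset.sum_congr rfl; intro j _
    rw [Finset.mul_sum]
    apply Finset.sum_congr rfl; intro k _
    ring
  rw [step]
  simp_rw [hconj, mul_ite, mul_one, mul_zero]
  rw [Matrix.trace]
  apply Finset.sum_congr rfl; intro i _
  rw [Finset.sum_ite_eq Finset.univ i (fun j => B i j)]
  simp [Matrix.diag_apply]

lemma pinch_bound (e : n → n → ℂ)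
    (horth : ∀ k l, (∑ i, (starRingEnd ℂ) (e k i) * e l i) = if k = l then (1:ℂ) else 0)
    (hcompl : ∀ i j, (∑ k, e k i * (starRingEnd ℂ) (e k j)) = if i = j then (1:ℂ) else 0)
    {B : Matrix n n ℂ} (hB : B.PosSemidef) (htr : B.trace = 1)
    (r : n → ℝ) (hr : ∀ k, (star (e k) ⬝ᵥ (B *ᵥ e k)) = (r k : ℂ))
    (hpos : 0 < Fintype.card n) :
    ‖vec (B - ∑ k, (r k : ℂ) • pureState (e k))‖ ^ 2 ≤ 1 - ((Fintype.card n : ℝ))⁻¹ := by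
  set P : n → Matrix n n ℂ := fun k => pureState (e k) with hP
  have hPB : ∀ k, (inner ℂ (vec (P k)) (vec B) : ℂ) = (r k : ℂ) := fun k => by
    rw [hP, inner_pure_matrix, hr]
  have hBP : ∀ k, (inner ℂ (vec B) (vec (P k)) : ℂ) = (r k : ℂ) := fun k => by
    rw [← inner_conj_symm, hPB]; simp
  have hPP : ∀ k l, (inner ℂ (vec (P k)) (vec (P l)) : ℂ) = if k = l then 1 else 0 := by
    intro k l
    rw [hP, inner_pure_pure, horth]
    by_cases h : k = l <;> simp [h]
  have hrsumC : (∑ k, (r k : ℂ)) = 1 := by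
    simp_rw [← hr]
    rw [sum_dot_eq_trace e hcompl B, htr]
  have hrsum : (∑ k, r k) = 1 := by exact_mod_cast hrsumC
  have hvecD : vec (∑ k, (r k : ℂ) • P k) = ∑ k, (r k : ℂ) • vec (P k) := by
    rw [vec_sum]
    apply Finset.sum_congr rfl; intro k _; rw [vec_smul]
  have hinnerBD : RCLike.re (inner ℂ (vec B) (vec (∑ k, (r k : ℂ) • P k)) : ℂ)
      = ∑ k, (r k) ^ 2 := by
    rw [hvecD, inner_sum]
    simp_rw [inner_smul_right, hBP]
    simp [← Complex.ofReal_pow, pow_two]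
  have hnormD : ‖vec (∑ k, (r k : ℂ) • P k)‖ ^ 2 = ∑ k, (r k) ^ 2 := by
    have h1 : ((‖vec (∑ k, (r k : ℂ) • P k)‖ : ℝ) ^ 2)
        = RCLike.re (inner ℂ (vec (∑ k, (r k : ℂ) • P k)) (vec (∑ k, (r k : ℂ) • P k)) : ℂ) := by
      rw [← norm_sq_eq_re_inner (𝕜 := ℂ)]
    rw [h1, hvecD, sum_inner]
    simp_rw [inner_smul_left, inner_sum, inner_smul_right, hPP, mul_ite, mul_one, mul_zero,
      Finset.sum_ite_eq, Finset.mem_univ, if_true, Complex.conj_ofReal]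
    simp [← Complex.ofReal_pow, pow_two]
  have hrq : (1:ℝ) ≤ (Fintype.card n : ℝ) * ∑ k, (r k) ^ 2 := by
    have h3 := sq_sum_le_card_mul_sum_sq (s := (Finset.univ : Finset n)) (f := r)
    rw [hrsum] at h3
    simpa using h3
  have hcard : (0:ℝ) < (Fintype.card n : ℝ) := by exact_mod_cast hpos
  have hchg : (∑ k, (r k : ℂ) • pureState (e k)) = ∑ k, (r k : ℂ) • P k := rfl
  rw [hchg, vec_sub, norm_sub_sq (𝕜 := ℂ), hinnerBD, hnormD]
  have hBle := norm_vec_le_one hB htr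
  have hS : (Fintype.card n : ℝ)⁻¹ ≤ ∑ k, r k ^ 2 := by
    rw [inv_eq_one_div, div_le_iff₀ hcard]
    nlinarith [hrq]
  linarith

lemma sum_prod_mul {m₁ m₂ : Type*} [Fintype m₁] [Fintype m₂] (f : m₁ → ℝ) (g : m₂ → ℝ) :
    (∑ y : m₁ × m₂, f y.1 * g y.2) = (∑ i, f i) * (∑ j, g j) := by
  rw [Fintype.sum_prod_type, Finset.sum_mul_sum]

lemma norm_vec_kron_sq {n₁ n₂ : Type*} [Fintype n₁] [Fintype n₂]
    (A : Matrix n₁ n₁ ℂ) (B : Matrix n₂ n₂ ℂ) :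
    ‖vec (A ⊗ₖ B)‖ ^ 2 = ‖vec A‖ ^ 2 * ‖vec B‖ ^ 2 := by
  rw [norm_vec_sq, norm_vec_sq, norm_vec_sq]
  calc ∑ p : (n₁ × n₂) × (n₁ × n₂), ‖(A ⊗ₖ B) p.1 p.2‖ ^ 2
      = ∑ x : n₁ × n₂, ∑ y : n₁ × n₂, ‖A x.1 y.1‖ ^ 2 * ‖B x.2 y.2‖ ^ 2 := by
        rw [Fintype.sum_prod_type]
        exact Finset.sum_congr rfl fun x _ => Finset.sum_congr rfl fun y _ => by
          simp [Matrix.kroneckerMap_apply, mul_pow]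
    _ = ∑ x : n₁ × n₂, (∑ i', ‖A x.1 i'‖ ^ 2) * (∑ j', ‖B x.2 j'‖ ^ 2) :=
        Finset.sum_congr rfl fun x _ => sum_prod_mul (fun t => ‖A x.1 t‖ ^ 2) (fun t => ‖B x.2 t‖ ^ 2)
    _ = (∑ i, ∑ i', ‖A i i'‖ ^ 2) * (∑ j, ∑ j', ‖B j j'‖ ^ 2) :=
        sum_prod_mul (fun t => ∑ i', ‖A t i'‖ ^ 2) (fun t => ∑ j', ‖B t j'‖ ^ 2)
    _ = (∑ p : n₁ × n₁, ‖A p.1 p.2‖ ^ 2) * (∑ p : n₂ × n₂, ‖B p.1 p.2‖ ^ 2) := by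
        rw [Fintype.sum_prod_type (f := fun p : n₁ × n₁ => ‖A p.1 p.2‖ ^ 2),
          Fintype.sum_prod_type (f := fun p : n₂ × n₂ => ‖B p.1 p.2‖ ^ 2)]

lemma norm_vec_kron {n₁ n₂ : Type*} [Fintype n₁] [Fintype n₂]
    (A : Matrix n₁ n₁ ℂ) (B : Matrix n₂ n₂ ℂ) :
    ‖vec (A ⊗ₖ B)‖ = ‖vec A‖ * ‖vec B‖ := by
  have h : ‖vec (A ⊗ₖ B)‖ ^ 2 = (‖vec A‖ * ‖vec B‖) ^ 2 := by
    rw [norm_vec_kron_sq]; ring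
  have hx : ‖vec (A ⊗ₖ B)‖ = Real.sqrt (‖vec (A ⊗ₖ B)‖ ^ 2) :=
    (Real.sqrt_sq (norm_nonneg _)).symm
  rw [hx, h, Real.sqrt_sq (by positivity)]

lemma isHermitian_smul_star {c : ℂ} (hc : star c = c) {M : Matrix n n ℂ} (h : M.IsHermitian) :
    (c • M).IsHermitian := by
  unfold Matrix.IsHermitian at *
  rw [Matrix.conjTranspose_smul, h, hc]

lemma isHermitian_smul_real (c : ℝ) {M : Matrix n n ℂ} (h : M.IsHermitian) :
    ((c : ℂ) • M).IsHermitian :=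
  isHermitian_smul_star (Complex.conj_ofReal c) h

lemma isHermitian_pure (ψ : n → ℂ) : (pureState ψ).IsHermitian := by
  ext i j
  simp only [Matrix.conjTranspose_apply, pureState, Matrix.vecMulVec_apply, Pi.star_apply,
    RCLike.star_def, _root_.map_mul, starRingEnd_self_apply]
  ring

lemma isHermitian_kron {n₁ n₂ : Type*} {A : Matrix n₁ n₁ ℂ} {B : Matrix n₂ n₂ ℂ}
    (hA : A.IsHermitian) (hB : B.IsHermitian) :
    (A ⊗ₖ B).IsHermitian := by
  ext ⟨i, j⟩ ⟨k, l⟩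
  simp only [Matrix.conjTranspose_apply, Matrix.kroneckerMap_apply, star_mul']
  congr 1
  · exact hA.apply i k
  · exact hB.apply j l

lemma isHermitian_sum {ι : Type*} (s : Finset ι) (f : ι → Matrix n n ℂ)
    (h : ∀ j ∈ s, (f j).IsHermitian) : (∑ j ∈ s, f j).IsHermitian := by
  unfold Matrix.IsHermitian
  rw [Matrix.conjTranspose_sum]
  exact Finset.sum_congr rfl h

lemma posSemidef_smul_real {c : ℝ} (hc : 0 ≤ c) {M : Matrix n n ℂ} (h : M.PosSemidef) :
    ((c : ℂ) • M).PosSemidef := by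
  refine Matrix.PosSemidef.of_dotProduct_mulVec_nonneg (isHermitian_smul_real c h.1) fun x => ?_
  rw [Matrix.smul_mulVec, dotProduct_smul, smul_eq_mul]
  exact mul_nonneg (Complex.zero_le_real.mpr hc) (h.dotProduct_mulVec_nonneg x)

lemma posSemidef_sum {ι : Type*} (s : Finset ι) (f : ι → Matrix n n ℂ)
    (h : ∀ j ∈ s, (f j).PosSemidef) : (∑ j ∈ s, f j).PosSemidef := by
  classical
  induction s using Finset.induction with
  | empty => simpa using Matrix.PosSemidef.zero
  | @insert a s hnot ih =>
      rw [Finset.sum_insert hnot]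
      exact (h a (Finset.mem_insert_self a s)).add
        (ih fun j hj => h j (Finset.mem_insert_of_mem hj))

/-- Rank-one spectral decomposition of a Hermitian matrix. -/
lemma spectral_rankOne {M : Matrix n n ℂ} (hM : M.IsHermitian) :
    M = ∑ k, (hM.eigenvalues k : ℂ) •
      pureState (fun i => (hM.eigenvectorUnitary : Matrix n n ℂ) i k) := by
  conv_lhs => rw [hM.spectral_theorem, Unitary.conjStarAlgAut_apply]
  ext i j
  rw [Matrix.mul_apply, Matrix.sum_apply]
  apply Finset.sum_congr rfl; intro k _
  rw [Matrix.mul_diagonal]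
  simp only [Matrix.smul_apply, pureState, Matrix.vecMulVec_apply, Pi.star_apply,
    Matrix.star_apply, RCLike.star_def, Function.comp_apply, smul_eq_mul]
  have hco : ((RCLike.ofReal : ℝ → ℂ) (hM.eigenvalues k)) = ((hM.eigenvalues k : ℝ) : ℂ) := rfl
  rw [hco]
  ring

lemma unitary_orth (U : Matrix n n ℂ) (hU : star U * U = 1) (k l : n) :
    (∑ i, (starRingEnd ℂ) (U i k) * U i l) = if k = l then (1:ℂ) else 0 := by
  have h2 := congrFun (congrFun hU k) l
  rw [Matrix.mul_apply] at h2
  simp only [Matrix.star_apply, RCLike.star_def] at h2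
  rw [h2, Matrix.one_apply]

lemma unitary_compl (U : Matrix n n ℂ) (hU : U * star U = 1) (i j : n) :
    (∑ k, U i k * (starRingEnd ℂ) (U j k)) = if i = j then (1:ℂ) else 0 := by
  have h2 := congrFun (congrFun hU i) j
  rw [Matrix.mul_apply] at h2
  simp only [Matrix.star_apply, RCLike.star_def] at h2
  rw [h2, Matrix.one_apply]

lemma kron_sum_right {n₁ n₂ : Type*} [Fintype n₂] {ι : Type*} (s : Finset ι)
    (A : Matrix n₁ n₁ ℂ) (f : ι → Matrix n₂ n₂ ℂ) :
    (A ⊗ₖ ∑ k ∈ s, f k) = ∑ k ∈ s, A ⊗ₖ f k := by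
  ext ⟨i, j⟩ ⟨i', j'⟩
  simp [Matrix.kroneckerMap_apply, Matrix.sum_apply, Finset.mul_sum]

lemma kron_sum_left {n₁ n₂ : Type*} [Fintype n₁] {ι : Type*} (s : Finset ι)
    (f : ι → Matrix n₁ n₁ ℂ) (B : Matrix n₂ n₂ ℂ) :
    ((∑ k ∈ s, f k) ⊗ₖ B) = ∑ k ∈ s, f k ⊗ₖ B := by
  ext ⟨i, j⟩ ⟨i', j'⟩
  simp [Matrix.kroneckerMap_apply, Matrix.sum_apply, Finset.sum_mul]

lemma kron_sub_right {n₁ n₂ : Type*} (A : Matrix n₁ n₁ ℂ) (B C : Matrix n₂ n₂ ℂ) :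
    (A ⊗ₖ (B - C)) = A ⊗ₖ B - A ⊗ₖ C := by
  ext ⟨i, j⟩ ⟨i', j'⟩
  simp [Matrix.kroneckerMap_apply, Matrix.sub_apply, mul_sub]

lemma pure_mulVec (ψ x : n → ℂ) : (pureState ψ) *ᵥ x = (star ψ ⬝ᵥ x) • ψ := by
  ext i
  simp only [Matrix.mulVec, dotProduct, pureState, Matrix.vecMulVec_apply, Pi.star_apply,
    Pi.smul_apply, smul_eq_mul, Finset.sum_mul]
  apply Finset.sum_congr rfl; intro j _
  ring

lemma dot_sum_smul (x : n → ℂ) {ι : Type*} (s : Finset ι) (c : ι → ℂ)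
    (f : ι → Matrix n n ℂ) :
    star x ⬝ᵥ ((∑ j ∈ s, c j • f j) *ᵥ x) = ∑ j ∈ s, c j * (star x ⬝ᵥ (f j *ᵥ x)) := by
  classical
  induction s using Finset.induction with
  | empty => simp
  | @insert a s hnot ih =>
      rw [Finset.sum_insert hnot, Finset.sum_insert hnot, Matrix.add_mulVec,
        dotProduct_add, ih, Matrix.smul_mulVec, dotProduct_smul,
        smul_eq_mul]

lemma qc_isHermitian {d₁ d₂ : ℕ} {χ : Matrix (Fin d₁ × Fin d₂) (Fin d₁ × Fin d₂) ℂ}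
    (h : IsQCState χ) : χ.IsHermitian := by
  obtain ⟨α, σ, e, hα0, hα1, hσ, he, rfl⟩ := h
  apply isHermitian_sum; intro k _
  exact isHermitian_smul_real (α k) (isHermitian_kron (hσ k).1.1 (isHermitian_pure (e k)))

end Stmt12Aux

end

open Stmt12Aux

/-- for every separable two-qudit state
`ρ_sep = Σ_k β_k ρ₁^{(k)} ⊗ ρ₂^{(k)}` on `ℂ^d⊗ℂ^d`, `D_g(ρ_sep) ≤ ((d-1)/d)²`. -/
theorem stmt12 {d m : ℕ} (hd : 2 ≤ d) (β : Fin m → ℝ) (hβ : ∀ k, 0 ≤ β k)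
    (hβ1 : ∑ k, β k = 1) (ρ₁ ρ₂ : Fin m → Matrix (Fin d) (Fin d) ℂ)
    (h₁ : ∀ k, IsState (ρ₁ k)) (h₂ : ∀ k, IsState (ρ₂ k)) :
    Dg (∑ k, (β k : ℂ) • (ρ₁ k ⊗ₖ ρ₂ k)) ≤ (((d : ℝ) - 1) / d) ^ 2 := by
  classical
  have hdpos : 0 < d := by omega
  have h2d : (2:ℝ) ≤ (d:ℝ) := by exact_mod_cast hd
  have hdR : (0:ℝ) < (d:ℝ) := by linarith
  set ρ : Matrix (Fin d × Fin d) (Fin d × Fin d) ℂ := ∑ k, (β k : ℂ) • (ρ₁ k ⊗ₖ ρ₂ k) with hρ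
  set ρB : Matrix (Fin d) (Fin d) ℂ := ∑ j, (β j : ℂ) • ρ₂ j with hρB
  have hρBpsd : ρB.PosSemidef :=
    posSemidef_sum _ _ fun j _ => posSemidef_smul_real (hβ j) (h₂ j).1
  have hρBtr : ρB.trace = 1 := by
    rw [hρB, Matrix.trace_sum]
    have : ∀ j : Fin m, ((β j : ℂ) • ρ₂ j).trace = (β j : ℂ) := by
      intro j
      rw [Matrix.trace_smul, (h₂ j).2, smul_eq_mul, mul_one]
    simp_rw [this]
    exact_mod_cast congrArg (Complex.ofReal ·) hβ1
  have hH := hρBpsd.1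
  set U : Matrix (Fin d) (Fin d) ℂ := (hH.eigenvectorUnitary : Matrix (Fin d) (Fin d) ℂ)
    with hUdef
  have hU1 : star U * U = 1 := Matrix.mem_unitaryGroup_iff'.mp hH.eigenvectorUnitary.2
  have hU2 : U * star U = 1 := Matrix.mem_unitaryGroup_iff.mp hH.eigenvectorUnitary.2
  set e : Fin d → Fin d → ℂ := fun k i => U i k with he
  have horthC : ∀ k l, (∑ i, (starRingEnd ℂ) (e k i) * e l i) = if k = l then (1:ℂ) else 0 :=
    fun k l => unitary_orth U hU1 k l
  have hcomplC : ∀ i j, (∑ k, e k i * (starRingEnd ℂ) (e k j)) = if i = j then (1:ℂ) else 0 :=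
    fun i j => unitary_compl U hU2 i j
  set lam : Fin d → ℝ := hH.eigenvalues with hlam
  have hspec : ρB = ∑ k, ((lam k : ℝ) : ℂ) • pureState (e k) := spectral_rankOne hH
  -- the measurement probabilities
  set r : Fin m → Fin d → ℝ := fun j k => (star (e k) ⬝ᵥ (ρ₂ j *ᵥ e k)).re with hrdef
  have hrval : ∀ j k, (star (e k) ⬝ᵥ (ρ₂ j *ᵥ e k)) = ((r j k : ℝ) : ℂ) := by
    intro j k
    have h0 := (h₂ j).1.dotProduct_mulVec_nonneg (e k)
    obtain ⟨hre, him⟩ := Complex.nonneg_iff.mp h0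
    apply Complex.ext
    · rfl
    · simpa using him.symm
  have hrnn : ∀ j k, 0 ≤ r j k := fun j k => (Complex.nonneg_iff.mp ((h₂ j).1.dotProduct_mulVec_nonneg (e k))).1
  set αv : Fin d → ℝ := fun k => ∑ j, β j * r j k with hαv
  have hα0 : ∀ k, 0 ≤ αv k := fun k =>
    Finset.sum_nonneg fun j _ => mul_nonneg (hβ j) (hrnn j k)
  have hrtr : ∀ j, (∑ k, r j k) = 1 := by
    intro j
    have hc : (∑ k, ((r j k : ℝ) : ℂ)) = 1 := by
      simp_rw [← hrval]
      rw [sum_dot_eq_trace e hcomplC (ρ₂ j), (h₂ j).2]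
    exact_mod_cast hc
  have hαsum : ∑ k, αv k = 1 := by
    rw [Finset.sum_comm]
    calc ∑ j, ∑ k, β j * r j k = ∑ j, β j * ∑ k, r j k := by
          apply Finset.sum_congr rfl; intro j _; rw [Finset.mul_sum]
      _ = 1 := by simp_rw [hrtr]; simpa using hβ1
  -- the conditional states
  set P : Fin d → Matrix (Fin d) (Fin d) ℂ := fun k => pureState (e k) with hPdef
  set σt : Fin d → Matrix (Fin d) (Fin d) ℂ :=
    fun k => ∑ j, ((β j * r j k : ℝ) : ℂ) • ρ₁ j with hσt
  have i0 : Fin d := ⟨0, by omega⟩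
  set σv : Fin d → Matrix (Fin d) (Fin d) ℂ := fun k =>
    if αv k = 0 then Matrix.diagonal (fun i => if i = i0 then (1:ℂ) else 0)
    else (((αv k)⁻¹ : ℝ) : ℂ) • σt k with hσv
  have hσtr : ∀ k, (σt k).trace = ((αv k : ℝ) : ℂ) := by
    intro k
    rw [show σt k = ∑ j, ((β j * r j k : ℝ) : ℂ) • ρ₁ j from rfl, Matrix.trace_sum]
    have : ∀ j : Fin m, (((β j * r j k : ℝ) : ℂ) • ρ₁ j).trace = ((β j * r j k : ℝ) : ℂ) := by
      intro j
      rw [Matrix.trace_smul, (h₁ j).2, smul_eq_mul, mul_one]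
    simp_rw [this]
    rw [show αv k = ∑ j, β j * r j k from rfl]
    push_cast
    rfl
  have hσstate : ∀ k, IsState (σv k) := by
    intro k
    by_cases hk : αv k = 0
    · rw [show σv k = if αv k = 0 then Matrix.diagonal (fun i => if i = i0 then (1:ℂ) else 0)
        else (((αv k)⁻¹ : ℝ) : ℂ) • σt k from rfl, if_pos hk]
      constructor
      · refine Matrix.posSemidef_diagonal_iff.mpr fun i => ?_
        by_cases hi : i = i0 <;> simp [hi]
      · rw [Matrix.trace_diagonal]
        rw [Finset.sum_ite_eq' Finset.univ i0 (fun _ => (1:ℂ))]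
        simp
    · rw [show σv k = if αv k = 0 then Matrix.diagonal (fun i => if i = i0 then (1:ℂ) else 0)
        else (((αv k)⁻¹ : ℝ) : ℂ) • σt k from rfl, if_neg hk]
      constructor
      · refine posSemidef_smul_real (inv_nonneg.mpr (hα0 k)) ?_
        exact posSemidef_sum _ _ fun j _ =>
          posSemidef_smul_real (mul_nonneg (hβ j) (hrnn j k)) (h₁ j).1
      · rw [Matrix.trace_smul, hσtr k, smul_eq_mul, ← Complex.ofReal_mul,
          inv_mul_cancel₀ hk]
        rfl
  have hσteq : ∀ k, ((αv k : ℝ) : ℂ) • σv k = σt k := by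
    intro k
    by_cases hk : αv k = 0
    · have hz : ∀ j ∈ Finset.univ, (((β j * r j k : ℝ) : ℂ) • ρ₁ j)
          = (0 : Matrix (Fin d) (Fin d) ℂ) := by
        intro j _
        have hz0 : β j * r j k = 0 :=
          (Finset.sum_eq_zero_iff_of_nonneg
            (fun j _ => mul_nonneg (hβ j) (hrnn j k))).mp hk j (Finset.mem_univ j)
        rw [hz0]
        simp
      have hσt0 : σt k = 0 := Finset.sum_eq_zero hz
      rw [hσt0, hk]
      simp
    · rw [show σv k = if αv k = 0 then Matrix.diagonal (fun i => if i = i0 then (1:ℂ) else 0)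
        else (((αv k)⁻¹ : ℝ) : ℂ) • σt k from rfl, if_neg hk, smul_smul, ← Complex.ofReal_mul,
        mul_inv_cancel₀ hk]
      simp
  set χ : Matrix (Fin d × Fin d) (Fin d × Fin d) ℂ :=
    ∑ k, ((αv k : ℝ) : ℂ) • (σv k ⊗ₖ pureState (e k)) with hχdef
  have hQC : IsQCState χ := by
    refine ⟨αv, σv, e, hα0, hαsum, hσstate, ?_, rfl⟩
    intro k l
    simpa [RCLike.star_def] using horthC k l
  -- rewrite χ
  set D : Fin m → Matrix (Fin d) (Fin d) ℂ := fun j => ∑ k, ((r j k : ℝ) : ℂ) • P k with hD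
  set O : Fin m → Matrix (Fin d) (Fin d) ℂ := fun j => ρ₂ j - D j with hO
  set At : Fin m → Matrix (Fin d) (Fin d) ℂ :=
    fun j => ρ₁ j - ((Fintype.card (Fin d) : ℂ))⁻¹ • 1 with hAt
  have hχ2 : χ = ∑ j, (β j : ℂ) • (ρ₁ j ⊗ₖ D j) := by
    rw [hχdef]
    calc ∑ k, ((αv k : ℝ) : ℂ) • (σv k ⊗ₖ P k)
        = ∑ k, (σt k ⊗ₖ P k) := by
          apply Finset.sum_congr rfl; intro k _
          rw [← Matrix.smul_kronecker, hσteq k]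
      _ = ∑ k, ∑ j, ((β j * r j k : ℝ) : ℂ) • (ρ₁ j ⊗ₖ P k) := by
          apply Finset.sum_congr rfl; intro k _
          rw [show σt k = ∑ j, ((β j * r j k : ℝ) : ℂ) • ρ₁ j from rfl, kron_sum_left]
          apply Finset.sum_congr rfl; intro j _
          rw [Matrix.smul_kronecker]
      _ = ∑ j, (β j : ℂ) • (ρ₁ j ⊗ₖ D j) := by
          rw [Finset.sum_comm]
          apply Finset.sum_congr rfl; intro j _
          calc ∑ k, ((β j * r j k : ℝ) : ℂ) • (ρ₁ j ⊗ₖ P k)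
              = ∑ k, (β j : ℂ) • (((r j k : ℝ) : ℂ) • (ρ₁ j ⊗ₖ P k)) := by
                apply Finset.sum_congr rfl; intro k _
                rw [smul_smul, ← Complex.ofReal_mul]
            _ = (β j : ℂ) • ∑ k, ((r j k : ℝ) : ℂ) • (ρ₁ j ⊗ₖ P k) := (Finset.smul_sum).symm
            _ = (β j : ℂ) • (ρ₁ j ⊗ₖ D j) := by
                congr 1
                rw [show D j = ∑ k, ((r j k : ℝ) : ℂ) • P k from rfl, kron_sum_right]
                apply Finset.sum_congr rfl; intro k _
                rw [Matrix.kronecker_smul]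
  -- the local part cancels
  have hlamval : ∀ k, (∑ j, (β j : ℂ) * ((r j k : ℝ) : ℂ)) = ((lam k : ℝ) : ℂ) := by
    intro k
    have h4 : star (e k) ⬝ᵥ (ρB *ᵥ e k)
        = ∑ j, (β j : ℂ) * (star (e k) ⬝ᵥ (ρ₂ j *ᵥ e k)) := by
      rw [hρB]; exact dot_sum_smul (e k) _ _ _
    have h6 : ∀ l, star (e k) ⬝ᵥ ((pureState (e l)) *ᵥ e k) = if l = k then 1 else 0 := by
      intro l
      rw [pure_mulVec, dotProduct_smul, smul_eq_mul]
      have hekl : star (e l) ⬝ᵥ e k = if l = k then (1:ℂ) else 0 := by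
        simpa [dotProduct, RCLike.star_def] using horthC l k
      have hekl' : star (e k) ⬝ᵥ e l = if k = l then (1:ℂ) else 0 := by
        simpa [dotProduct, RCLike.star_def] using horthC k l
      rw [hekl, hekl']
      by_cases h : l = k
      · simp [h]
      · simp [h, Ne.symm h]
    have h5 : star (e k) ⬝ᵥ (ρB *ᵥ e k) = ((lam k : ℝ) : ℂ) := by
      conv_lhs => rw [hspec]
      rw [dot_sum_smul]
      simp_rw [h6, mul_ite, mul_one, mul_zero]
      rw [Finset.sum_ite_eq' Finset.univ k (fun l => ((lam l : ℝ) : ℂ))]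
      simp
    rw [← h5, h4]
    apply Finset.sum_congr rfl; intro j _
    rw [hrval]
  have hβD : (∑ j, (β j : ℂ) • D j) = ρB := by
    calc ∑ j, (β j : ℂ) • D j
        = ∑ j, ∑ k, ((β j : ℂ) * ((r j k : ℝ) : ℂ)) • P k := by
          apply Finset.sum_congr rfl; intro j _
          rw [show D j = ∑ k, ((r j k : ℝ) : ℂ) • P k from rfl, Finset.smul_sum]
          apply Finset.sum_congr rfl; intro k _
          rw [smul_smul]
      _ = ∑ k, (∑ j, (β j : ℂ) * ((r j k : ℝ) : ℂ)) • P k := by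
          rw [Finset.sum_comm]
          apply Finset.sum_congr rfl; intro k _
          rw [Finset.sum_smul]
      _ = ∑ k, ((lam k : ℝ) : ℂ) • P k := by simp_rw [hlamval]
      _ = ρB := hspec.symm
  have hcancel : (∑ j, (β j : ℂ) • O j) = 0 := by
    have hsplit : ∑ j, (β j : ℂ) • O j = ρB - ∑ j, (β j : ℂ) • D j := by
      rw [hρB, ← Finset.sum_sub_distrib]
      apply Finset.sum_congr rfl; intro j _
      rw [show O j = ρ₂ j - D j from rfl, smul_sub]
    rw [hsplit, hβD, sub_self]
  have hΔ : ρ - χ = ∑ j, (β j : ℂ) • (At j ⊗ₖ O j) := by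
    have h7 : ρ - χ = ∑ j, (β j : ℂ) • (ρ₁ j ⊗ₖ O j) := by
      rw [hρ, hχ2, ← Finset.sum_sub_distrib]
      apply Finset.sum_congr rfl; intro j _
      rw [← smul_sub, ← kron_sub_right]
    have h8 : ∀ j, (ρ₁ j ⊗ₖ O j)
        = (At j ⊗ₖ O j) + (Fintype.card (Fin d) : ℂ)⁻¹ • ((1 : Matrix (Fin d) (Fin d) ℂ) ⊗ₖ O j) := by
      intro j
      have h8a : ρ₁ j = At j + ((Fintype.card (Fin d) : ℂ))⁻¹ • 1 := by
        rw [show At j = ρ₁ j - ((Fintype.card (Fin d) : ℂ))⁻¹ • 1 from rfl]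
        rw [sub_add_cancel]
      conv_lhs => rw [h8a]
      rw [Matrix.add_kronecker, Matrix.smul_kronecker]
    rw [h7]
    calc ∑ j, (β j : ℂ) • (ρ₁ j ⊗ₖ O j)
        = ∑ j, ((β j : ℂ) • (At j ⊗ₖ O j)
            + (β j : ℂ) • ((Fintype.card (Fin d) : ℂ)⁻¹ • ((1 : Matrix (Fin d) (Fin d) ℂ) ⊗ₖ O j))) := by
          apply Finset.sum_congr rfl; intro j _
          rw [h8 j, smul_add]
      _ = (∑ j, (β j : ℂ) • (At j ⊗ₖ O j))
            + ∑ j, (β j : ℂ) • ((Fintype.card (Fin d) : ℂ)⁻¹ • ((1 : Matrix (Fin d) (Fin d) ℂ) ⊗ₖ O j)) :=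
          Finset.sum_add_distrib
      _ = ∑ j, (β j : ℂ) • (At j ⊗ₖ O j) := by
          have h9 : ∑ j, (β j : ℂ) • ((Fintype.card (Fin d) : ℂ)⁻¹ • ((1 : Matrix (Fin d) (Fin d) ℂ) ⊗ₖ O j))
              = (Fintype.card (Fin d) : ℂ)⁻¹ • ((1 : Matrix (Fin d) (Fin d) ℂ) ⊗ₖ ∑ j, (β j : ℂ) • O j) := by
            rw [kron_sum_right, Finset.smul_sum]
            apply Finset.sum_congr rfl; intro j _
            rw [Matrix.kronecker_smul, smul_comm]
          rw [h9, hcancel, Matrix.kronecker_zero, smul_zero, add_zero]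
  -- Hermitian facts
  have hAtherm : ∀ j, (At j).IsHermitian := by
    intro j
    refine ((h₁ j).1.1).sub (isHermitian_smul_star ?_ Matrix.isHermitian_one)
    simp
  have hOherm : ∀ j, (O j).IsHermitian := by
    intro j
    exact ((h₂ j).1.1).sub (isHermitian_sum _ _ fun k _ =>
      isHermitian_smul_real (r j k) (isHermitian_pure (e k)))
  have hΔherm : (ρ - χ).IsHermitian := by
    rw [hΔ]
    exact isHermitian_sum _ _ fun j _ =>
      isHermitian_smul_real (β j) (isHermitian_kron (hAtherm j) (hOherm j))
  have hρherm : ρ.IsHermitian :=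
    isHermitian_sum _ _ fun j _ =>
      isHermitian_smul_real (β j) (isHermitian_kron (h₁ j).1.1 (h₂ j).1.1)
  -- norm bounds
  have hcard : Fintype.card (Fin d) = d := Fintype.card_fin d
  have hcpos : 0 < Fintype.card (Fin d) := by rw [hcard]; omega
  have hfrac : 1 - ((Fintype.card (Fin d) : ℝ))⁻¹ = ((d:ℝ) - 1) / d := by
    rw [hcard]
    field_simp
  have hge : (0:ℝ) ≤ ((d:ℝ) - 1) / d := by
    apply div_nonneg _ (le_of_lt hdR)
    linarith
  have hterm : ∀ j, ‖Stmt12Aux.vec (At j ⊗ₖ O j)‖ ≤ ((d:ℝ) - 1) / d := by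
    intro j
    rw [norm_vec_kron]
    have hA2 : ‖Stmt12Aux.vec (At j)‖ ^ 2 ≤ ((d:ℝ) - 1) / d := by
      rw [← hfrac]
      exact tilde_bound hcpos (h₁ j).1 (h₁ j).2
    have hO2 : ‖Stmt12Aux.vec (O j)‖ ^ 2 ≤ ((d:ℝ) - 1) / d := by
      rw [← hfrac]
      exact pinch_bound e horthC hcomplC (h₂ j).1 (h₂ j).2 (r j) (hrval j) hcpos
    have hmul : ‖Stmt12Aux.vec (At j)‖ ^ 2 * ‖Stmt12Aux.vec (O j)‖ ^ 2 ≤ (((d:ℝ) - 1) / d) * (((d:ℝ) - 1) / d) :=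
      mul_le_mul hA2 hO2 (sq_nonneg _) hge
    nlinarith [norm_nonneg (Stmt12Aux.vec (At j)), norm_nonneg (Stmt12Aux.vec (O j)), hmul, hge,
      sq_nonneg (‖Stmt12Aux.vec (At j)‖ * ‖Stmt12Aux.vec (O j)‖ - ((d:ℝ) - 1) / d)]
  have hnormΔ : ‖Stmt12Aux.vec (ρ - χ)‖ ≤ ((d:ℝ) - 1) / d := by
    have hvec : Stmt12Aux.vec (ρ - χ) = ∑ j, (β j : ℂ) • Stmt12Aux.vec (At j ⊗ₖ O j) := by
      rw [hΔ, Stmt12Aux.vec_sum]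
      apply Finset.sum_congr rfl; intro j _
      rw [Stmt12Aux.vec_smul]
    rw [hvec]
    calc ‖∑ j, (β j : ℂ) • Stmt12Aux.vec (At j ⊗ₖ O j)‖
        ≤ ∑ j, ‖(β j : ℂ) • Stmt12Aux.vec (At j ⊗ₖ O j)‖ := norm_sum_le _ _
      _ = ∑ j, β j * ‖Stmt12Aux.vec (At j ⊗ₖ O j)‖ := by
          apply Finset.sum_congr rfl; intro j _
          rw [norm_smul, Complex.norm_real, Real.norm_eq_abs, abs_of_nonneg (hβ j)]
      _ ≤ ∑ j, β j * (((d:ℝ) - 1) / d) :=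
          Finset.sum_le_sum fun j _ => mul_le_mul_of_nonneg_left (hterm j) (hβ j)
      _ = ((d:ℝ) - 1) / d := by rw [← Finset.sum_mul, hβ1, one_mul]
  have hval : (((ρ - χ) * (ρ - χ)).trace).re ≤ (((d:ℝ) - 1) / d) ^ 2 := by
    rw [trace_sq_re _ hΔherm]
    exact pow_le_pow_left₀ (norm_nonneg _) hnormΔ 2
  -- conclude
  have hmem : (((ρ - χ) * (ρ - χ)).trace).re
      ∈ {x : ℝ | ∃ χ', IsQCState χ' ∧ x = (((ρ - χ') * (ρ - χ')).trace).re} := ⟨χ, hQC, rfl⟩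
  have hbdd : BddBelow {x : ℝ | ∃ χ', IsQCState χ' ∧ x = (((ρ - χ') * (ρ - χ')).trace).re} := by
    refine ⟨0, fun x hx => ?_⟩
    obtain ⟨χ', hχ', rfl⟩ := hx
    rw [trace_sq_re _ (hρherm.sub (qc_isHermitian hχ'))]
    positivity
  have hDg : Dg ρ ≤ (((ρ - χ) * (ρ - χ)).trace).re := csInf_le hbdd hmem
  exact le_trans hDg hval
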